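/- arXiv:2410.00699 — 2 statements merged into one kernel-verified Lean document; each statement's English description precedes it below -/
import Mathlib

section
/- For any square matrix A ∈ ℝ^{p×p} and matrix B ∈ ℝ^{p×d}, there exists a vector β ∈ ℝ^p with ‖β‖₂ = ‖B‖_F such that Tr(Bᵀ A B) ≤ βᵀ A β. -/
open Matrix

/-- Scaling of the quadratic form. -/
lemma quad_smul {p : ℕ} (A : Matrix (Fin p) (Fin p) ℝ) (r : ℝ) (u : Fin p → ℝ) :
    (r • u) ⬝ᵥ (A *ᵥ (r • u)) = r ^ 2 * (u ⬝ᵥ (A *ᵥ u)) := by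
  rw [Matrix.mulVec_smul, smul_dotProduct, dotProduct_smul,
    smul_eq_mul, smul_eq_mul]
  ring

/-- **Lemma 2.** For any square matrix `A : p × p` and matrix `B : p × d`, there is a vector
`β` with Euclidean norm equal to the Frobenius norm of `B` such that
`Tr(Bᵀ A B) ≤ βᵀ A β`. -/
theorem exists_vector_trace_le (p d : ℕ)
    (A : Matrix (Fin p) (Fin p) ℝ) (B : Matrix (Fin p) (Fin d) ℝ) :
    ∃ β : Fin p → ℝ,
      Real.sqrt (∑ i, (β i) ^ 2) = Real.sqrt (∑ i, ∑ j, (B i j) ^ 2) ∧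
      (Bᵀ * A * B).trace ≤ β ⬝ᵥ (A *ᵥ β) := by
  rcases Nat.eq_zero_or_pos p with hp | hp
  · subst hp
    refine ⟨0, by simp, ?_⟩
    simp [Matrix.trace, Matrix.diag, Matrix.mul_apply, dotProduct]
  -- main case
  have hQc : Continuous fun v : EuclideanSpace ℝ (Fin p) =>
      (v : Fin p → ℝ) ⬝ᵥ (A *ᵥ (v : Fin p → ℝ)) := by
    simp only [dotProduct, Matrix.mulVec]
    refine continuous_finset_sum _ fun i _ => Continuous.mul ?_ ?_
    · exact (EuclideanSpace.proj i).continuous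
    · exact continuous_finset_sum _ fun j _ =>
        continuous_const.mul (EuclideanSpace.proj j).continuous
  have hne : (Metric.sphere (0 : EuclideanSpace ℝ (Fin p)) 1).Nonempty := by
    refine ⟨EuclideanSpace.single ⟨0, hp⟩ 1, ?_⟩
    simp [EuclideanSpace.norm_single]
  obtain ⟨v0, hv0mem, hmax⟩ :=
    (isCompact_sphere (0 : EuclideanSpace ℝ (Fin p)) 1).exists_isMaxOn hne hQc.continuousOn
  set M : ℝ := (v0 : Fin p → ℝ) ⬝ᵥ (A *ᵥ (v0 : Fin p → ℝ)) with hM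
  have hv0norm : ∑ i, (v0 : Fin p → ℝ) i ^ 2 = 1 := by
    have h1 : ‖v0‖ = 1 := by simpa using hv0mem
    have := EuclideanSpace.norm_eq v0
    rw [h1] at this
    have h2 : Real.sqrt (∑ i, ‖(v0 : Fin p → ℝ) i‖ ^ 2) = 1 := this.symm
    have h3 : ∑ i, ‖(v0 : Fin p → ℝ) i‖ ^ 2 = 1 := by
      have := congrArg (fun x => x ^ 2) h2
      simpa [Real.sq_sqrt (Finset.sum_nonneg fun i _ => sq_nonneg _)] using this
    simpa [Real.norm_eq_abs, sq_abs] using h3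
  -- key pointwise bound
  have key : ∀ c : Fin p → ℝ, c ⬝ᵥ (A *ᵥ c) ≤ (∑ i, c i ^ 2) * M := by
    intro c
    by_cases hc : c = 0
    · simp [hc]
    · have hs : (0 : ℝ) < ∑ i, c i ^ 2 := by
        have hnn : (0:ℝ) ≤ ∑ i, c i ^ 2 := Finset.sum_nonneg fun i _ => sq_nonneg _
        rcases hnn.lt_or_eq with h | h
        · exact h
        · exfalso; apply hc
          funext i
          have := (Finset.sum_eq_zero_iff_of_nonneg
            (fun i _ => sq_nonneg (c i))).1 h.symm i (Finset.mem_univ i)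
          exact pow_eq_zero_iff (n := 2) (by norm_num) |>.1 this
      set s : ℝ := Real.sqrt (∑ i, c i ^ 2) with hsdef
      have hspos : 0 < s := Real.sqrt_pos.2 hs
      have hs2 : s ^ 2 = ∑ i, c i ^ 2 := Real.sq_sqrt hs.le
      set u : EuclideanSpace ℝ (Fin p) := (s⁻¹ : ℝ) • (WithLp.toLp 2 c : EuclideanSpace ℝ (Fin p)) with hu
      have humem : u ∈ Metric.sphere (0 : EuclideanSpace ℝ (Fin p)) 1 := by
        have : ‖u‖ = 1 := by
          rw [EuclideanSpace.norm_eq]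
          have : ∀ i, ‖(u : Fin p → ℝ) i‖ ^ 2 = s⁻¹ ^ 2 * c i ^ 2 := by
            intro i
            simp [hu, Real.norm_eq_abs, sq_abs, mul_pow]
          rw [Finset.sum_congr rfl fun i _ => this i, ← Finset.mul_sum, ← hs2]
          have : s⁻¹ ^ 2 * s ^ 2 = 1 := by
            field_simp
          rw [this, Real.sqrt_one]
        simpa [mem_sphere_iff_norm] using this
      have hQu : (u : Fin p → ℝ) ⬝ᵥ (A *ᵥ (u : Fin p → ℝ)) ≤ M := hmax humem
      have hcu : c = s • (u : Fin p → ℝ) := by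
        funext i
        simp [hu, smul_eq_mul]
        field_simp
      calc c ⬝ᵥ (A *ᵥ c) = s ^ 2 * ((u : Fin p → ℝ) ⬝ᵥ (A *ᵥ (u : Fin p → ℝ))) := by
            rw [hcu, quad_smul]
        _ ≤ s ^ 2 * M := by
            apply mul_le_mul_of_nonneg_left hQu (sq_nonneg s)
        _ = (∑ i, c i ^ 2) * M := by rw [hs2]
  -- trace identity
  have htr : (Bᵀ * A * B).trace
      = ∑ k, (fun i => B i k) ⬝ᵥ (A *ᵥ (fun i => B i k)) := by
    apply Finset.sum_congr rfl
    intro k _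
    simp only [Matrix.diag, Matrix.mul_apply, Matrix.transpose_apply, dotProduct,
      Matrix.mulVec, Finset.sum_mul, Finset.mul_sum]
    rw [Finset.sum_comm]
    apply Finset.sum_congr rfl
    intro i _
    apply Finset.sum_congr rfl
    intro j _
    ring
  set t : ℝ := Real.sqrt (∑ i, ∑ j, (B i j) ^ 2) with ht
  have htn : (0:ℝ) ≤ ∑ i, ∑ j, (B i j) ^ 2 :=
    Finset.sum_nonneg fun i _ => Finset.sum_nonneg fun j _ => sq_nonneg _
  have ht2 : t ^ 2 = ∑ i, ∑ j, (B i j) ^ 2 := Real.sq_sqrt htn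
  refine ⟨t • (v0 : Fin p → ℝ), ?_, ?_⟩
  · have h1 : ∀ i, (t • (v0 : Fin p → ℝ)) i ^ 2 = t ^ 2 * (v0 : Fin p → ℝ) i ^ 2 := by
      intro i
      have : (t • (v0 : Fin p → ℝ)) i = t * (v0 : Fin p → ℝ) i := rfl
      rw [this]; ring
    have h2 : ∑ i, (t • (v0 : Fin p → ℝ)) i ^ 2 = t ^ 2 := by
      rw [Finset.sum_congr rfl fun i _ => h1 i, ← Finset.mul_sum, hv0norm, mul_one]
    rw [h2]
    exact Real.sqrt_sq (Real.sqrt_nonneg _)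
  · rw [quad_smul, htr]
    calc ∑ k, (fun i => B i k) ⬝ᵥ (A *ᵥ (fun i => B i k))
        ≤ ∑ k, (∑ i, B i k ^ 2) * M := Finset.sum_le_sum fun k _ => key _
      _ = (∑ k, ∑ i, B i k ^ 2) * M := by rw [Finset.sum_mul]
      _ = (∑ i, ∑ k, B i k ^ 2) * M := by rw [Finset.sum_comm]
      _ = t ^ 2 * M := by rw [ht2]
end

section
/- For the least squares estimator B̂ = (XᵀX)⁺XᵀY with Y = XB + E, noise rows of E i.i.d. N(0, Σ_ε) independent of X, and test point x ~ N(0, Σ_x) independent of training data, the bias of the prediction risk conditional on X equals Tr(Bᵀ(XᵀX(XᵀX)⁺ − I)Σ_x((XᵀX)⁺XᵀX − I)B) and the variance equals Tr(Σ_ε)·Tr(Σ_x (XᵀX)⁺). -/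
open Matrix MeasureTheory ProbabilityTheory

instance {m n : Type*} : MeasurableSpace (Matrix m n ℝ) :=
  inferInstanceAs (MeasurableSpace (m → n → ℝ))

-- The Moore–Penrose pseudoinverse of a real matrix, defined (noncomputably) as the unique
-- matrix satisfying the four Penrose conditions.

open Classical in
noncomputable def moorePenrose {m n : ℕ} (A : Matrix (Fin m) (Fin n) ℝ) :
    Matrix (Fin n) (Fin m) ℝ :=
  if h : ∃ B : Matrix (Fin n) (Fin m) ℝ,
      A * B * A = A ∧ B * A * B = B ∧ (A * B)ᵀ = A * B ∧ (B * A)ᵀ = B * A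
  then h.choose else 0

private lemma pinv_unique {m : ℕ} {A M N : Matrix (Fin m) (Fin m) ℝ}
    (h1 : A * M * A = A) (h2 : M * A * M = M) (h3 : (A * M)ᵀ = A * M) (h4 : (M * A)ᵀ = M * A)
    (g1 : A * N * A = A) (g2 : N * A * N = N) (g3 : (A * N)ᵀ = A * N) (g4 : (N * A)ᵀ = N * A) :
    M = N := by
  have e1 : (A * M) * (A * N) = A * N := by
    rw [show (A * M) * (A * N) = (A * M * A) * N by noncomm_ring, h1]
  have e2 : (A * M) * (A * N) = A * M := by
    calc (A * M) * (A * N) = (A * M)ᵀ * (A * N)ᵀ := by rw [h3, g3]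
    _ = ((A * N) * (A * M))ᵀ := (transpose_mul _ _).symm
    _ = ((A * N * A) * M)ᵀ := by rw [show (A * N) * (A * M) = (A * N * A) * M by noncomm_ring]
    _ = (A * M)ᵀ := by rw [g1]
    _ = A * M := h3
  have hAM : A * M = A * N := e2.symm.trans e1
  have f1 : (M * A) * (N * A) = M * A := by
    rw [show (M * A) * (N * A) = M * (A * N * A) by noncomm_ring, g1]
  have f2 : (M * A) * (N * A) = N * A := by
    calc (M * A) * (N * A) = (M * A)ᵀ * (N * A)ᵀ := by rw [h4, g4]
    _ = ((N * A) * (M * A))ᵀ := (transpose_mul _ _).symm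
    _ = (N * (A * M * A))ᵀ := by rw [show (N * A) * (M * A) = N * (A * M * A) by noncomm_ring]
    _ = (N * A)ᵀ := by rw [h1]
    _ = N * A := g4
  have hMA : M * A = N * A := f1.symm.trans f2
  calc M = M * A * M := h2.symm
  _ = N * A * M := by rw [hMA]
  _ = N * (A * M) := by rw [mul_assoc]
  _ = N * (A * N) := by rw [hAM]
  _ = N * A * N := by rw [mul_assoc]
  _ = N := g2

lemma mp_props {m : ℕ} (A : Matrix (Fin m) (Fin m) ℝ) (hA : Aᵀ = A) :
    (moorePenrose A)ᵀ = moorePenrose A ∧ moorePenrose A * A * moorePenrose A = moorePenrose A := by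
  unfold moorePenrose
  split_ifs with h
  · obtain ⟨p1, p2, p3, p4⟩ := h.choose_spec
    set M := h.choose with hM
    have q1 : A * Mᵀ * A = A := by
      have := congrArg Matrix.transpose p1
      simpa [Matrix.transpose_mul, hA, Matrix.mul_assoc] using this
    have q2 : Mᵀ * A * Mᵀ = Mᵀ := by
      have := congrArg Matrix.transpose p2
      simpa [Matrix.transpose_mul, hA, Matrix.mul_assoc] using this
    have q3 : (A * Mᵀ)ᵀ = A * Mᵀ := by
      rw [transpose_mul, transpose_transpose, hA, ← p4, transpose_mul, hA]
    have q4 : (Mᵀ * A)ᵀ = Mᵀ * A := by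
      rw [transpose_mul, transpose_transpose, hA, ← p3, transpose_mul, hA]
    have hsym : Mᵀ = M := pinv_unique q1 q2 q3 q4 p1 p2 p3 p4
    exact ⟨hsym, p2⟩
  · simp


lemma trace_sq_expand {p d : ℕ} (v : Matrix (Fin 1) (Fin p) ℝ) (C : Matrix (Fin p) (Fin d) ℝ) :
    ((v * C)ᵀ * (v * C)).trace = ∑ j, ∑ k, (v 0 j * v 0 k) * ((C * Cᵀ) j k) := by
  simp only [Matrix.trace, Matrix.diag, Matrix.mul_apply, Matrix.transpose_apply,
    Fin.sum_univ_one]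
  simp_rw [Finset.sum_mul_sum]
  calc ∑ l : Fin d, ∑ j : Fin p, ∑ k : Fin p, (v 0 j * C j l) * (v 0 k * C k l)
      = ∑ j : Fin p, ∑ l : Fin d, ∑ k : Fin p, (v 0 j * C j l) * (v 0 k * C k l) :=
        Finset.sum_comm
    _ = ∑ j : Fin p, ∑ k : Fin p, ∑ l : Fin d, (v 0 j * C j l) * (v 0 k * C k l) :=
        Finset.sum_congr rfl fun _ _ => Finset.sum_comm
    _ = ∑ j : Fin p, ∑ k : Fin p, v 0 j * v 0 k * ∑ l : Fin d, C j l * C k l := by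
        simp_rw [Finset.mul_sum]
        exact Finset.sum_congr rfl fun _ _ => Finset.sum_congr rfl fun _ _ =>
          Finset.sum_congr rfl fun _ _ => by ring

lemma integral_bias {Ω : Type*} [MeasurableSpace Ω] (μ : Measure Ω) [IsProbabilityMeasure μ]
    {p d : ℕ} (x : Ω → Matrix (Fin 1) (Fin p) ℝ) (Sx : Matrix (Fin p) (Fin p) ℝ)
    (hxcov : ∀ j k : Fin p, ∫ ω, x ω 0 j * x ω 0 k ∂μ = Sx j k)
    (hintx : ∀ j k, Integrable (fun ω => x ω 0 j * x ω 0 k) μ)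
    (C : Matrix (Fin p) (Fin d) ℝ) :
    ∫ ω, ((x ω * C)ᵀ * (x ω * C)).trace ∂μ = (Cᵀ * Sx * C).trace := by
  have h1 : ∫ ω, ((x ω * C)ᵀ * (x ω * C)).trace ∂μ
      = ∑ j, ∑ k, ∫ ω, (x ω 0 j * x ω 0 k) * ((C * Cᵀ) j k) ∂μ := by
    simp_rw [trace_sq_expand]
    rw [integral_finset_sum]
    · exact Finset.sum_congr rfl fun j _ => integral_finset_sum _ fun k _ =>
        (hintx j k).mul_const _
    · exact fun j _ => integrable_finset_sum _ fun k _ => (hintx j k).mul_const _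
  rw [h1]
  have h2 : ∀ j k : Fin p, ∫ ω, (x ω 0 j * x ω 0 k) * ((C * Cᵀ) j k) ∂μ
      = Sx j k * ((C * Cᵀ) j k) := by
    intro j k; rw [integral_mul_const, hxcov]
  simp_rw [h2]
  calc ∑ j, ∑ k, Sx j k * ((C * Cᵀ) j k) = (Sx * (C * Cᵀ)ᵀ).trace := by
        simp only [Matrix.trace, Matrix.diag, Matrix.mul_apply, Matrix.transpose_apply]
    _ = (Sx * (C * Cᵀ)).trace := by rw [transpose_mul, transpose_transpose]
    _ = (Cᵀ * Sx * C).trace := by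
        rw [← Matrix.mul_assoc, Matrix.trace_mul_cycle]

lemma entry_expand {n p d : ℕ} (P : Matrix (Fin p) (Fin n) ℝ) (F : Matrix (Fin n) (Fin d) ℝ)
    (j k : Fin p) :
    ((P * F) * (P * F)ᵀ) j k = ∑ i, ∑ i', ((F * Fᵀ) i i') * (P j i * P k i') := by
  have : (P * F) * (P * F)ᵀ = P * ((F * Fᵀ) * Pᵀ) := by
    rw [transpose_mul]
    simp [Matrix.mul_assoc]
  rw [this]
  simp only [Matrix.mul_apply, Matrix.transpose_apply]
  rw [Finset.sum_congr rfl fun i _ => Finset.mul_sum _ _ _]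
  exact Finset.sum_congr rfl fun i _ => Finset.sum_congr rfl fun i' _ => by ring

lemma integral_var {Ω : Type*} [MeasurableSpace Ω] (μ : Measure Ω) [IsProbabilityMeasure μ]
    {n p d : ℕ}
    (x : Ω → Matrix (Fin 1) (Fin p) ℝ) (E : Ω → Matrix (Fin n) (Fin d) ℝ)
    (hEmeas : Measurable E) (hxmeas : Measurable x)
    (Se : Matrix (Fin d) (Fin d) ℝ) (Sx : Matrix (Fin p) (Fin p) ℝ)
    (hEcov : ∀ i : Fin n, ∀ j k : Fin d, ∫ ω, E ω i j * E ω i k ∂μ = Se j k)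
    (hErows : ∀ i i' : Fin n, i ≠ i' → ∀ j k : Fin d, ∫ ω, E ω i j * E ω i' k ∂μ = 0)
    (hxcov : ∀ j k : Fin p, ∫ ω, x ω 0 j * x ω 0 k ∂μ = Sx j k)
    (hindep : IndepFun x E μ)
    (hintE : ∀ i i' j k, Integrable (fun ω => E ω i j * E ω i' k) μ)
    (hintx : ∀ j k, Integrable (fun ω => x ω 0 j * x ω 0 k) μ)
    (P : Matrix (Fin p) (Fin n) ℝ) :
    ∫ ω, ((x ω * (P * E ω))ᵀ * (x ω * (P * E ω))).trace ∂μ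
      = Se.trace * (Sx * (P * Pᵀ)).trace := by
  -- independence of coordinate products
  have hmeasx : ∀ j k : Fin p, Measurable fun m : Matrix (Fin 1) (Fin p) ℝ => m 0 j * m 0 k :=
    fun j k => ((show Measurable (fun m : Matrix (Fin 1) (Fin p) ℝ => m 0 j) from (measurable_pi_apply j).comp (measurable_pi_apply 0)).mul
      (show Measurable (fun m : Matrix (Fin 1) (Fin p) ℝ => m 0 k) from (measurable_pi_apply k).comp (measurable_pi_apply 0)))
  have hmeasE : ∀ i i' : Fin n, Measurable fun F : Matrix (Fin n) (Fin d) ℝ => (F * Fᵀ) i i' := by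
    intro i i'
    simp only [Matrix.mul_apply, Matrix.transpose_apply]
    exact Finset.measurable_sum _ fun l _ =>
      ((show Measurable (fun F : Matrix (Fin n) (Fin d) ℝ => F i l) from (measurable_pi_apply l).comp (measurable_pi_apply i)).mul
        (show Measurable (fun F : Matrix (Fin n) (Fin d) ℝ => F i' l) from (measurable_pi_apply l).comp (measurable_pi_apply i')))
  have hind : ∀ (j k : Fin p) (i i' : Fin n),
      IndepFun (fun ω => x ω 0 j * x ω 0 k) (fun ω => (E ω * (E ω)ᵀ) i i') μ :=
    fun j k i i' => hindep.comp (hmeasx j k) (hmeasE i i')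
  -- integrability and value of the E-part
  have hintEE : ∀ i i' : Fin n, Integrable (fun ω => (E ω * (E ω)ᵀ) i i') μ := by
    intro i i'
    have : (fun ω => (E ω * (E ω)ᵀ) i i')
        = fun ω => ∑ l, E ω i l * E ω i' l := by
      funext ω; simp [Matrix.mul_apply]
    rw [this]
    exact integrable_finset_sum _ fun l _ => hintE i i' l l
  have hEEval : ∀ i i' : Fin n, ∫ ω, (E ω * (E ω)ᵀ) i i' ∂μ
      = if i = i' then Se.trace else 0 := by
    intro i i'
    have h0 : ∫ ω, (E ω * (E ω)ᵀ) i i' ∂μ = ∑ l, ∫ ω, E ω i l * E ω i' l ∂μ := by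
      simp_rw [Matrix.mul_apply, Matrix.transpose_apply]
      exact integral_finset_sum _ fun l _ => hintE i i' l l
    rw [h0]
    by_cases h : i = i'
    · subst h; simp only [if_pos rfl, Matrix.trace, Matrix.diag]
      exact Finset.sum_congr rfl fun l _ => hEcov i l l
    · rw [if_neg h]
      exact Finset.sum_eq_zero fun l _ => hErows i i' h l l
  -- integrability of products
  have hintprod : ∀ (j k : Fin p) (i i' : Fin n),
      Integrable (fun ω => (x ω 0 j * x ω 0 k) * ((E ω * (E ω)ᵀ) i i')) μ :=
    fun j k i i' => (hind j k i i').integrable_mul (hintx j k) (hintEE i i')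
  -- expand the integrand pointwise
  have hpt : ∀ ω, ((x ω * (P * E ω))ᵀ * (x ω * (P * E ω))).trace
      = ∑ j, ∑ k, ∑ i, ∑ i',
          ((x ω 0 j * x ω 0 k) * ((E ω * (E ω)ᵀ) i i')) * (P j i * P k i') := by
    intro ω
    rw [trace_sq_expand]
    refine Finset.sum_congr rfl fun j _ => Finset.sum_congr rfl fun k _ => ?_
    rw [entry_expand]
    rw [Finset.mul_sum]
    refine Finset.sum_congr rfl fun i _ => ?_
    rw [Finset.mul_sum]
    exact Finset.sum_congr rfl fun i' _ => by ring
  simp_rw [hpt]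
  -- swap integral and sums
  rw [integral_finset_sum _ (fun j _ => integrable_finset_sum _ fun k _ =>
    integrable_finset_sum _ fun i _ => integrable_finset_sum _ fun i' _ =>
      (hintprod j k i i').mul_const _)]
  have hswap : ∀ j : Fin p,
      (∫ ω, ∑ k, ∑ i, ∑ i', ((x ω 0 j * x ω 0 k) * ((E ω * (E ω)ᵀ) i i')) * (P j i * P k i') ∂μ)
      = ∑ k, ∑ i, ∑ i', (Sx j k * (if i = i' then Se.trace else 0)) * (P j i * P k i') := by
    intro j
    rw [integral_finset_sum _ (fun k _ => integrable_finset_sum _ fun i _ =>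
      integrable_finset_sum _ fun i' _ => (hintprod j k i i').mul_const _)]
    refine Finset.sum_congr rfl fun k _ => ?_
    rw [integral_finset_sum _ (fun i _ => integrable_finset_sum _ fun i' _ =>
      (hintprod j k i i').mul_const _)]
    refine Finset.sum_congr rfl fun i _ => ?_
    rw [integral_finset_sum _ (fun i' _ => (hintprod j k i i').mul_const _)]
    refine Finset.sum_congr rfl fun i' _ => ?_
    rw [integral_mul_const]
    congr 1
    have := (hind j k i i').integral_mul_eq_mul_integral (hintx j k).aestronglyMeasurable
      (hintEE i i').aestronglyMeasurable
    rw [show (fun ω => x ω 0 j * x ω 0 k) * (fun ω => (E ω * (E ω)ᵀ) i i')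
        = fun ω => (x ω 0 j * x ω 0 k) * ((E ω * (E ω)ᵀ) i i') from rfl] at this
    rw [this, hxcov, hEEval]
  simp_rw [hswap]
  -- collapse the diagonal and compute the trace
  simp only [mul_ite, mul_zero, ite_mul, zero_mul, Finset.sum_ite_eq, Finset.mem_univ, if_true]
  have expand : Se.trace * (Sx * (P * Pᵀ)).trace
      = ∑ j, ∑ k, ∑ i, Sx j k * Se.trace * (P j i * P k i) := by
    have h1 : (Sx * (P * Pᵀ)).trace = ∑ j, ∑ k, ∑ i, Sx j k * (P j i * P k i) := by
      simp only [Matrix.trace, Matrix.diag, Matrix.mul_apply, Matrix.transpose_apply,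
        Finset.mul_sum]
      exact Finset.sum_congr rfl fun a _ => Finset.sum_congr rfl fun b _ =>
        Finset.sum_congr rfl fun i _ => by ring
    rw [h1, Finset.mul_sum]
    refine Finset.sum_congr rfl fun j _ => ?_
    rw [Finset.mul_sum]
    refine Finset.sum_congr rfl fun k _ => ?_
    rw [Finset.mul_sum]
    exact Finset.sum_congr rfl fun i _ => by ring
  exact expand.symm

/-- **Lemma 1.** For the least squares estimator `B̂ = (XᵀX)⁺XᵀY` with `Y = XB + E`, noise
rows of `E` centered with covariance `Σ_ε` and uncorrelated across rows (as for i.i.d.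
`N(0, Σ_ε)` rows) independent of everything, and test point `x` centered with covariance `Σ_x`
(as for `N(0, Σ_x)`) independent of the training data: conditionally on the fixed design `X`,
the bias of the prediction risk equals `Tr(Bᵀ(XᵀX(XᵀX)⁺ − I)Σ_x((XᵀX)⁺XᵀX − I)B)` and the
variance equals `Tr(Σ_ε)·Tr(Σ_x (XᵀX)⁺)`. -/
theorem least_squares_bias_and_variance {Ω : Type*} [MeasurableSpace Ω] (μ : Measure Ω)
    [IsProbabilityMeasure μ] {n p d : ℕ}
    (X : Matrix (Fin n) (Fin p) ℝ) (B : Matrix (Fin p) (Fin d) ℝ)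
    (Se : Matrix (Fin d) (Fin d) ℝ) (Sx : Matrix (Fin p) (Fin p) ℝ)
    (E : Ω → Matrix (Fin n) (Fin d) ℝ) (x : Ω → Matrix (Fin 1) (Fin p) ℝ)
    (hEmeas : Measurable E) (hxmeas : Measurable x)
    -- noise rows are centered with covariance `Σ_ε`, uncorrelated across distinct rows
    (hEzero : ∀ i j, ∫ ω, E ω i j ∂μ = 0)
    (hEcov : ∀ i : Fin n, ∀ j k : Fin d, ∫ ω, E ω i j * E ω i k ∂μ = Se j k)
    (hErows : ∀ i i' : Fin n, i ≠ i' → ∀ j k : Fin d, ∫ ω, E ω i j * E ω i' k ∂μ = 0)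
    -- the test point is centered with covariance `Σ_x` and independent of the noise
    (hxzero : ∀ j, ∫ ω, x ω 0 j ∂μ = 0)
    (hxcov : ∀ j k : Fin p, ∫ ω, x ω 0 j * x ω 0 k ∂μ = Sx j k)
    (hindep : IndepFun x E μ)
    -- integrability of all second-moment quantities involved
    (hintE : ∀ i i' j k, Integrable (fun ω => E ω i j * E ω i' k) μ)
    (hintx : ∀ j k, Integrable (fun ω => x ω 0 j * x ω 0 k) μ)
    -- the least squares estimator and its conditional mean
    (Bhat : Ω → Matrix (Fin p) (Fin d) ℝ)
    (hBhat : ∀ ω, Bhat ω = moorePenrose (Xᵀ * X) * Xᵀ * (X * B + E ω))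
    (EB : Matrix (Fin p) (Fin d) ℝ) (hEB : EB = moorePenrose (Xᵀ * X) * Xᵀ * X * B) :
    (∫ ω, ((x ω * B - x ω * EB)ᵀ * (x ω * B - x ω * EB)).trace ∂μ =
        (Bᵀ * (Xᵀ * X * moorePenrose (Xᵀ * X) - 1) * Sx *
          (moorePenrose (Xᵀ * X) * (Xᵀ * X) - 1) * B).trace) ∧
    (∫ ω, ((x ω * EB - x ω * Bhat ω)ᵀ * (x ω * EB - x ω * Bhat ω)).trace ∂μ =
        Se.trace * (Sx * moorePenrose (Xᵀ * X)).trace) := by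
  obtain ⟨hMsym, hMAM⟩ := mp_props (Xᵀ * X) (by rw [transpose_mul, transpose_transpose])
  set M := moorePenrose (Xᵀ * X) with hMdef
  constructor
  · -- bias
    have hb : ∀ ω : Ω, x ω * B - x ω * EB = x ω * (B - EB) :=
      fun ω => (Matrix.mul_sub _ _ _).symm
    simp_rw [hb]
    rw [integral_bias μ x Sx hxcov hintx (B - EB)]
    rw [hEB]
    congr 1
    simp only [Matrix.transpose_sub, Matrix.transpose_mul, Matrix.transpose_transpose, hMsym,
      Matrix.sub_mul, Matrix.mul_sub, Matrix.one_mul, Matrix.mul_one, Matrix.mul_assoc]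
    abel
  · -- variance
    have hv : ∀ ω : Ω, x ω * EB - x ω * Bhat ω = x ω * ((-(M * Xᵀ)) * E ω) := by
      intro ω
      rw [hBhat, hEB, ← Matrix.mul_sub]
      congr 1
      simp only [Matrix.mul_add, Matrix.neg_mul, Matrix.mul_assoc]
      abel
    simp_rw [hv]
    rw [integral_var μ x E hEmeas hxmeas Se Sx hEcov hErows hxcov hindep hintE hintx
      (-(M * Xᵀ))]
    congr 3
    calc (-(M * Xᵀ)) * (-(M * Xᵀ))ᵀ = (M * Xᵀ) * (X * M) := by
          rw [Matrix.transpose_neg, Matrix.neg_mul, Matrix.mul_neg, neg_neg, transpose_mul,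
            transpose_transpose, hMsym]
      _ = M * (Xᵀ * X) * M := by simp [Matrix.mul_assoc]
      _ = M := hMAM
end
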